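/- There do not exist seven closed disks A, B_1, ..., B_6 in the plane such that each B_i has radius at least the radius of A, each B_i intersects A, and the disks B_1, ..., B_6 are pairwise disjoint. -/

import Mathlib

open Complex Metric Real

lemma re_mul_conj_eq (z w : ℂ) (hz : z ≠ 0) (hw : w ≠ 0) :
    (z * (starRingEnd ℂ) w).re = ‖z‖ * ‖w‖ * Real.cos (z.arg - w.arg) := by
  have hz' : ‖z‖ ≠ 0 := by simpa using hz
  have hw' : ‖w‖ ≠ 0 := by simpa using hw
  rw [Real.cos_sub, Complex.cos_arg hz, Complex.cos_arg hw, Complex.sin_arg, Complex.sin_arg]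
  field_simp
  rw [Complex.mul_re, Complex.conj_re, Complex.conj_im]; ring

lemma abs_diff_of_cos_lt_half {t : ℝ} (h : Real.cos t < 1/2) (hlt : |t| < 2 * π) :
    π/3 < |t| ∧ |t| < 5 * π / 3 := by
  have hpi := Real.pi_pos
  have hct : Real.cos |t| < 1/2 := by rwa [Real.cos_abs]
  constructor
  · by_contra hle
    push_neg at hle
    have := Real.cos_le_cos_of_nonneg_of_le_pi (abs_nonneg t) (by linarith) hle
    rw [Real.cos_pi_div_three] at this
    linarith
  · by_contra hle
    push_neg at hle
    have h1 : Real.cos |t| = Real.cos (2 * π - |t|) := by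
      rw [Real.cos_sub, Real.cos_two_pi, Real.sin_two_pi]; ring
    have h2 : Real.cos (2 * π - |t|) ≥ 1/2 := by
      have := Real.cos_le_cos_of_nonneg_of_le_pi (x := 2 * π - |t|) (by linarith)
        (y := π/3) (by linarith) (by linarith)
      rw [Real.cos_pi_div_three] at this
      linarith
    linarith [h1 ▸ h2, hct]

/-- There is no configuration of seven closed disks `A, B₁, …, B₆` in the plane such
that each `Bᵢ` has radius at least that of `A`, each `Bᵢ` intersects `A`, and the
`Bᵢ` are pairwise disjoint. -/
theorem no_six_disjoint_disks_touching :
    ¬ ∃ (x : EuclideanSpace ℝ (Fin 2)) (rA : ℝ)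
        (y : Fin 6 → EuclideanSpace ℝ (Fin 2)) (r : Fin 6 → ℝ),
      0 < rA ∧ (∀ i, rA ≤ r i) ∧
      (∀ i, (Metric.closedBall x rA ∩ Metric.closedBall (y i) (r i)).Nonempty) ∧
      (∀ i j, i ≠ j →
        Disjoint (Metric.closedBall (y i) (r i)) (Metric.closedBall (y j) (r j))) := by
  rintro ⟨x, rA, y, r, hrA, hr, hmeet, hdisj⟩
  have hpi := Real.pi_pos
  -- distance facts
  have hxy : ∀ i, dist x (y i) ≤ rA + r i := by
    intro i
    obtain ⟨p, hp1, hp2⟩ := hmeet i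
    rw [Metric.mem_closedBall] at hp1 hp2
    calc dist x (y i) ≤ dist x p + dist p (y i) := dist_triangle _ _ _
      _ ≤ rA + r i := by rw [dist_comm x p]; exact add_le_add hp1 hp2
  have hij : ∀ i j, i ≠ j → r i + r j < dist (y i) (y j) := by
    intro i j h
    have := hdisj i j h
    rwa [disjoint_closedBall_closedBall_iff (le_trans hrA.le (hr i))
      (le_trans hrA.le (hr j))] at this
  -- transfer to ℂ
  set f := Complex.orthonormalBasisOneI.repr.symm with hf
  set z : Fin 6 → ℂ := fun i => f (y i) - f x with hzdef
  have hz_abs : ∀ i, ‖z i‖ = dist x (y i) := by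
    intro i
    have h1 : ‖z i‖ = dist (f (y i)) (f x) := by
      rw [dist_eq_norm]
    rw [h1, f.dist_map, dist_comm]
  have hz_sub : ∀ i j, ‖z i - z j‖ = dist (y i) (y j) := by
    intro i j
    have : z i - z j = f (y i) - f (y j) := by simp [hzdef]
    rw [this, ← dist_eq_norm]
    exact f.dist_map _ _
  have hexne : ∀ i : Fin 6, ∃ j, j ≠ i := by
    intro i
    refine ⟨if i = 0 then 1 else 0, ?_⟩
    split <;> simp_all <;> omega
  have hzpos : ∀ i, 0 < ‖z i‖ := by
    intro i
    rcases lt_or_eq_of_le (norm_nonneg (z i)) with h | h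
    · exact h
    have hx0 : dist x (y i) = 0 := by rw [← hz_abs]; exact h.symm
    have hx : x = y i := by rwa [dist_eq_zero] at hx0
    obtain ⟨j, hj⟩ := hexne i
    have h1 := hij i j (Ne.symm hj)
    have h2 := hxy j
    rw [← hx] at h1
    linarith [hr i]
  have hzne : ∀ i, z i ≠ 0 := fun i => by
    intro h; exact absurd (by simp [h] : ‖z i‖ = 0) (ne_of_gt (hzpos i))
  -- cosine inequality
  have hcos : ∀ i j, i ≠ j → Real.cos ((z i).arg - (z j).arg) < 1/2 := by
    intro i j h
    set di := ‖z i‖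
    set dj := ‖z j‖
    set s := r i + r j with hs
    have hdi : di ≤ s := by
      have h1 := hxy i; have h2 := hr j; have h3 := hz_abs i
      simp only [di, hs]; linarith
    have hdj : dj ≤ s := by
      have h1 := hxy j; have h2 := hr i; have h3 := hz_abs j
      simp only [dj, hs]; linarith
    have hd : s < ‖z i - z j‖ := by
      rw [hz_sub]; exact hij i j h
    have hsq : (‖z i - z j‖)^2 = di^2 + dj^2
        - 2 * (di * dj * Real.cos ((z i).arg - (z j).arg)) := by
      rw [Complex.sq_norm, Complex.normSq_sub, ← Complex.sq_norm, ← Complex.sq_norm,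
        re_mul_conj_eq _ _ (hzne i) (hzne j)]
    have hdipos := hzpos i
    have hdjpos := hzpos j
    have hspos : 0 < s := by simp only [hs]; linarith [hr i, hr j]
    have h5 : 0 < ‖z i - z j‖ - s := sub_pos.2 hd
    have h6 : (0:ℝ) < ‖z i - z j‖ + s := by linarith [(hzpos i).trans_le hdi]
    nlinarith [mul_pos hdipos hdjpos,
      mul_nonneg (sub_nonneg.2 hdi) (by linarith : (0:ℝ) ≤ s + di - dj),
      mul_nonneg (sub_nonneg.2 hdj) hdjpos.le, mul_pos h5 h6, sq_nonneg (di - dj)]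
  -- arg differences
  set a : Fin 6 → ℝ := fun i => (z i).arg with ha
  have habs : ∀ i j, i ≠ j → π/3 < |a i - a j| ∧ |a i - a j| < 5 * π / 3 := by
    intro i j h
    apply abs_diff_of_cos_lt_half (hcos i j h)
    have h1 : -π < a i := Complex.neg_pi_lt_arg (z i)
    have h2 : a i ≤ π := Complex.arg_le_pi (z i)
    have h3 : -π < a j := Complex.neg_pi_lt_arg (z j)
    have h4 : a j ≤ π := Complex.arg_le_pi (z j)
    rw [abs_lt]; constructor <;> linarith
  -- sort the arguments
  set σ := Tuple.sort a with hσ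
  set b : Fin 6 → ℝ := a ∘ σ with hb
  have hmono : Monotone b := Tuple.monotone_sort a
  have low : ∀ i j : Fin 6, i < j → b i + π/3 < b j := by
    intro i j h
    have hne : σ i ≠ σ j := (Equiv.injective σ).ne h.ne
    obtain ⟨h1, _⟩ := habs (σ i) (σ j) hne
    have hm : b i ≤ b j := hmono h.le
    rw [abs_sub_comm, show a (σ j) - a (σ i) = b j - b i from rfl,
      _root_.abs_of_nonneg (sub_nonneg.2 hm)] at h1
    linarith
  have high : b 5 - b 0 < 5 * π / 3 := by
    have hne : σ 0 ≠ σ 5 := (Equiv.injective σ).ne (by decide)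
    obtain ⟨_, h2⟩ := habs (σ 0) (σ 5) hne
    rw [abs_sub_comm, abs_lt] at h2
    exact h2.2
  linarith [low 0 1 (by decide), low 1 2 (by decide), low 2 3 (by decide),
    low 3 4 (by decide), low 4 5 (by decide), high]
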